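/- Let R = F₂[τ][u, v]/(u² + τv) and let L be the localization of R at the multiplicative set of powers of v. Then L is a free module over F₂[τ] with basis {v^j : j ∈ ℤ} ∪ {u·v^j : j ∈ ℤ} (images of v^j and uv^j, with v^{−1} the inverse of v). -/

import Mathlib

open MvPolynomial

set_option synthInstance.maxHeartbeats 2000000
set_option maxHeartbeats 2000000

/-- `F₂[τ, u, v]`, with `τ = X 0`, `u = X 1`, `v = X 2`. -/
abbrev Poly18 := MvPolynomial (Fin 3) (ZMod 2)

/-- The ideal `(u² + τ·v)`. -/
noncomputable def relIdeal18 : Ideal Poly18 := Ideal.span {X 1 ^ 2 + X 0 * X 2}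

/-- `R = F₂[τ][u, v]/(u² + τ·v)`. -/
abbrev Ring18 := Poly18 ⧸ relIdeal18

/-- The structure map `F₂[τ] → R`, `τ ↦ τ`. -/
noncomputable def structMap18 : Polynomial (ZMod 2) →+* Ring18 :=
  ((Ideal.Quotient.mkₐ (ZMod 2) relIdeal18).comp
    (Polynomial.aeval (X 0 : Poly18) :
      Polynomial (ZMod 2) →ₐ[ZMod 2] Poly18)).toRingHom

namespace Aux18
open AddMonoidAlgebra
abbrev M18 := AddMonoidAlgebra (ZMod 2) (ℕ × ℤ)
abbrev P2 := Polynomial (ZMod 2)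
noncomputable def phi : Poly18 →+* M18 :=
  (MvPolynomial.aeval
    ![single ((2:ℕ), (-1:ℤ)) (1:ZMod 2),
      single ((1:ℕ), (0:ℤ)) (1:ZMod 2),
      single ((0:ℕ), (1:ℤ)) (1:ZMod 2)] : Poly18 →ₐ[ZMod 2] M18).toRingHom
lemma phi_X0 : phi (X 0) = single ((2:ℕ), (-1:ℤ)) (1:ZMod 2) := by simp [phi]
lemma phi_X1 : phi (X 1) = single ((1:ℕ), (0:ℤ)) (1:ZMod 2) := by simp [phi]
lemma phi_X2 : phi (X 2) = single ((0:ℕ), (1:ℤ)) (1:ZMod 2) := by simp [phi]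
lemma phi_rel : phi (X 1 ^ 2 + X 0 * X 2) = 0 := by
  rw [map_add, map_pow, map_mul, phi_X0, phi_X1, phi_X2,
    AddMonoidAlgebra.single_pow, AddMonoidAlgebra.single_mul_single]
  have h1 : (2:ℕ) • (((1:ℕ), (0:ℤ))) = (((2:ℕ), (0:ℤ))) := by simp [Prod.smul_def]
  have h2 : (((2:ℕ), (-1:ℤ))) + (((0:ℕ), (1:ℤ))) = (((2:ℕ), (0:ℤ))) := by simp [Prod.ext_iff]
  rw [h1, h2, ← AddMonoidAlgebra.single_add]
  norm_num
  decide

-- NEW PART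
lemma hker : ∀ a ∈ relIdeal18, phi a = 0 := by
  intro a ha
  rw [relIdeal18, Ideal.mem_span_singleton'] at ha
  obtain ⟨c, rfl⟩ := ha
  rw [map_mul, phi_rel, mul_zero]

noncomputable def phib : Ring18 →+* M18 := Ideal.Quotient.lift relIdeal18 phi hker

lemma phib_mk (p : Poly18) : phib (Ideal.Quotient.mk relIdeal18 p) = phi p :=
  Ideal.Quotient.lift_mk relIdeal18 phi hker

noncomputable def rho : P2 →+* M18 :=
  (Polynomial.aeval (single ((2:ℕ), (-1:ℤ)) (1:ZMod 2)) : P2 →ₐ[ZMod 2] M18).toRingHom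

lemma rho_X : rho Polynomial.X = single ((2:ℕ), (-1:ℤ)) (1:ZMod 2) := by simp [rho]

noncomputable instance modP : Module P2 M18 := Module.compHom _ rho

lemma smulP (c : P2) (m : M18) : c • m = rho c * m := rfl

lemma Xpow_smul (k : ℕ) (e : ℕ) (j : ℤ) :
    (Polynomial.X ^ k : P2) • (single (e, j) (1:ZMod 2) : M18) = single (e + 2*k, j - k) 1 := by
  rw [smulP, map_pow, rho_X, AddMonoidAlgebra.single_pow, one_pow,
    AddMonoidAlgebra.single_mul_single, one_mul]
  congr 1
  simp [Prod.smul_def, Prod.ext_iff]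
  constructor
  · ring
  · ring

lemma monomial_smul_single (k : ℕ) (a : ZMod 2) (e : ℕ) (j : ℤ) :
    (Polynomial.monomial k a : P2) • (single (e, j) (1:ZMod 2) : M18)
      = single (e + 2*k, j - k) a := by
  rw [← Polynomial.C_mul_X_pow_eq_monomial, mul_smul, Xpow_smul, smulP]
  have hC : rho (Polynomial.C a) = algebraMap (ZMod 2) M18 a := by simp [rho]
  rw [hC, ← Algebra.smul_def, AddMonoidAlgebra.smul_single, smul_eq_mul, mul_one]

noncomputable def fb : Bool × ℤ → M18 := fun x => single ((if x.1 then 1 else 0 : ℕ), x.2) 1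

noncomputable def Psi : ((Bool × ℤ) →₀ P2) →ₗ[P2] M18 := Finsupp.linearCombination P2 fb

noncomputable def Gm : M18 →ₗ[ZMod 2] ((Bool × ℤ) →₀ P2) :=
  (Finsupp.lsum (ZMod 2) fun (y : ℕ × ℤ) =>
    (Finsupp.lsingle ((decide (y.1 % 2 = 1), y.2 + (y.1 / 2 : ℕ)) : Bool × ℤ)).comp
      (LinearMap.toSpanSingleton (ZMod 2) P2 (Polynomial.X ^ (y.1 / 2)))).comp
    (AddMonoidAlgebra.coeffLinearEquiv (ZMod 2)).toLinearMap

lemma Gm_single (a : ℕ) (j : ℤ) (c : ZMod 2) :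
    Gm (single (a, j) c)
      = Finsupp.single ((decide (a % 2 = 1), j + (a / 2 : ℕ)) : Bool × ℤ)
          (c • Polynomial.X ^ (a / 2)) := by
  rw [Gm]
  exact Finsupp.lsum_single (ZMod 2) _ _ _

lemma Gm_smul_fb (p : Bool × ℤ) (c : P2) : Gm (c • fb p) = Finsupp.single p c := by
  induction c using Polynomial.induction_on' with
  | add f g hf hg => rw [add_smul, map_add, hf, hg, Finsupp.single_add]
  | monomial n a =>
    obtain ⟨x, j⟩ := p
    rw [fb]
    simp only
    rw [monomial_smul_single, Gm_single]
    have h1 : ((if x then 1 else 0 : ℕ) + 2 * n) / 2 = n := by cases x <;> simp <;> omega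
    have h2 : (decide (((if x then 1 else 0 : ℕ) + 2 * n) % 2 = 1)) = x := by
      cases x <;> simp <;> omega
    rw [h1, h2]
    congr 1
    · simp [Prod.ext_iff]
    · rw [Polynomial.smul_eq_C_mul, Polynomial.C_mul_X_pow_eq_monomial]

lemma left_inv : ∀ x : (Bool × ℤ) →₀ P2, Gm (Psi x) = x := by
  intro x
  induction x using Finsupp.induction_linear with
  | zero => simp
  | add f g hf hg => rw [map_add, map_add, hf, hg]
  | single p c =>
    rw [Psi, Finsupp.linearCombination_single, Gm_smul_fb]

lemma right_inv : ∀ m : M18, Psi (Gm m) = m := by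
  intro m
  induction m using AddMonoidAlgebra.induction_linear with
  | zero => simp
  | add f g hf hg => rw [map_add, map_add, hf, hg]
  | single p c =>
    obtain ⟨a, j⟩ := p
    rw [Gm_single, Psi, Finsupp.linearCombination_single, fb]
    simp only
    rw [Polynomial.smul_eq_C_mul, Polynomial.C_mul_X_pow_eq_monomial, monomial_smul_single]
    have h1 : (if (decide (a % 2 = 1)) then 1 else 0 : ℕ) + 2 * (a / 2) = a := by
      by_cases h : a % 2 = 1 <;> simp [h] <;> omega
    rw [h1]
    congr 1
    simp [Prod.ext_iff]

noncomputable def PsiEquiv : ((Bool × ℤ) →₀ P2) ≃ₗ[P2] M18 :=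
  LinearEquiv.ofBijective Psi
    ⟨Function.LeftInverse.injective left_inv, Function.RightInverse.surjective right_inv⟩

noncomputable def basisM : Module.Basis (Bool × ℤ) P2 M18 := Module.Basis.ofRepr PsiEquiv.symm

lemma basisM_apply (x : Bool × ℤ) : basisM x = fb x := by
  rw [basisM, Module.Basis.coe_ofRepr]
  simp only [LinearEquiv.symm_symm]
  show Psi (Finsupp.single x 1) = fb x
  rw [Psi, Finsupp.linearCombination_single, one_smul]

lemma phib_structMap : phib.comp structMap18 = rho := by
  apply Polynomial.ringHom_ext
  · intro a
    exact RingHom.congr_fun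
      (RingHom.ext_zmod ((phib.comp structMap18).comp (Polynomial.C : ZMod 2 →+* P2))
        (rho.comp (Polynomial.C : ZMod 2 →+* P2))) a
  · show phib (structMap18 Polynomial.X) = rho Polynomial.X
    have h : structMap18 Polynomial.X = Ideal.Quotient.mk relIdeal18 (X 0) := by
      simp [structMap18]
    rw [h, phib_mk, phi_X0, rho_X]

lemma single_v_pow (n : ℕ) :
    (single ((0:ℕ), (1:ℤ)) (1:ZMod 2) : M18) ^ n = single ((0:ℕ), (n:ℤ)) 1 := by
  rw [AddMonoidAlgebra.single_pow, one_pow]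
  congr 1
  simp [Prod.smul_def]

lemma surj_aux : ∀ z : M18, ∃ (p : Poly18) (n : ℕ),
    z * single ((0:ℕ), (n:ℤ)) 1 = phi p := by
  intro z
  induction z using AddMonoidAlgebra.induction_linear with
  | zero => exact ⟨0, 0, by simp⟩
  | add f g hf hg =>
    obtain ⟨p, n, hp⟩ := hf
    obtain ⟨q, m, hq⟩ := hg
    refine ⟨p * X 2 ^ m + q * X 2 ^ n, n + m, ?_⟩
    have hsplit : (single ((0:ℕ), ((n+m:ℕ):ℤ)) 1 : M18)
        = single ((0:ℕ), (n:ℤ)) 1 * single ((0:ℕ), (m:ℤ)) 1 := by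
      rw [AddMonoidAlgebra.single_mul_single, one_mul]
      congr 1
    rw [add_mul, map_add, map_mul, map_mul, map_pow, map_pow, phi_X2, single_v_pow,
      single_v_pow, ← hp, ← hq, hsplit]
    ring
  | single p c =>
    obtain ⟨a, j⟩ := p
    refine ⟨MvPolynomial.C c * X 1 ^ a * X 2 ^ ((j + (j.natAbs : ℤ)).toNat), j.natAbs, ?_⟩
    rw [map_mul, map_mul, map_pow, map_pow, phi_X1, phi_X2, single_v_pow,
      AddMonoidAlgebra.single_pow, one_pow]
    have hC : phi (MvPolynomial.C c) = single ((0:ℕ),(0:ℤ)) c := by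
      have : phi (MvPolynomial.C c) = algebraMap (ZMod 2) M18 c := by simp [phi]
      rw [this]
      rw [AddMonoidAlgebra.coe_algebraMap]
      simp [AddMonoidAlgebra.singleZeroRingHom]
      rfl
    rw [hC, AddMonoidAlgebra.single_mul_single, AddMonoidAlgebra.single_mul_single,
      AddMonoidAlgebra.single_mul_single]
    congr 1
    · have ht : (((j + (j.natAbs:ℤ)).toNat : ℤ)) = j + (j.natAbs:ℤ) :=
        Int.toNat_of_nonneg (by omega)
      simp [Prod.ext_iff, Prod.smul_def, ht]
      have h := neg_abs_le j
      linarith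
    · ring

end Aux18

open Aux18

/-- Let `L` be the localization of `R = F₂[τ][u, v]/(u² + τ·v)` at the multiplicative set of
powers of `v`, viewed as an `F₂[τ]`-module via `F₂[τ] → R → L`.  Then `L` is free over `F₂[τ]`
with basis `{v^j : j ∈ ℤ} ∪ {u·v^j : j ∈ ℤ}`: the basis is pinned down by `b (false, 0) = 1`,
`b (true, 0) = u`, and multiplication by `v` carrying `b (x, j)` to `b (x, j + 1)`, so that
`b (false, j) = v^j` and `b (true, j) = u·v^j` (with `v⁻¹` the inverse of `v`). -/
theorem stmt_18 (L : Type) [CommRing L] [Algebra Ring18 L]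
    [IsLocalization.Away (Ideal.Quotient.mk relIdeal18 (X 2)) L]
    [Algebra (Polynomial (ZMod 2)) L]
    (hcomp : algebraMap (Polynomial (ZMod 2)) L = (algebraMap Ring18 L).comp structMap18) :
    ∃ b : Module.Basis (Bool × ℤ) (Polynomial (ZMod 2)) L,
      b (false, 0) = 1 ∧
      b (true, 0) = algebraMap Ring18 L (Ideal.Quotient.mk relIdeal18 (X 1)) ∧
      ∀ (x : Bool) (j : ℤ),
        algebraMap Ring18 L (Ideal.Quotient.mk relIdeal18 (X 2)) * b (x, j) = b (x, j + 1) := by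
  classical
  letI : Algebra (ZMod 2) L :=
    ((algebraMap Ring18 L).comp (algebraMap (ZMod 2) Ring18)).toAlgebra
  obtain ⟨vu, hvu⟩ := IsLocalization.map_units
    (M := Submonoid.powers (Ideal.Quotient.mk relIdeal18 (X 2))) L
    ⟨Ideal.Quotient.mk relIdeal18 (X 2),
      Submonoid.mem_powers (Ideal.Quotient.mk relIdeal18 (X 2))⟩
  have hvu' : (vu : L) = algebraMap Ring18 L (Ideal.Quotient.mk relIdeal18 (X 2)) := hvu
  set uL := algebraMap Ring18 L (Ideal.Quotient.mk relIdeal18 (X 1)) with huL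
  let g : Multiplicative (ℕ × ℤ) →* L :=
    { toFun := fun x =>
        uL ^ (Multiplicative.toAdd x).1 * ((vu ^ (Multiplicative.toAdd x).2 : Lˣ) : L),
      map_one' := by simp,
      map_mul' := by
        intro x y
        simp only [toAdd_mul, Prod.fst_add, Prod.snd_add, pow_add, zpow_add, Units.val_mul]
        ring }
  let ψ : M18 →ₐ[ZMod 2] L := (AddMonoidAlgebra.lift (ZMod 2) L (ℕ × ℤ)) g
  have hpsi_single : ∀ (a : ℕ × ℤ) (b : ZMod 2),
      ψ (AddMonoidAlgebra.single a b) = b • (uL ^ a.1 * ((vu ^ a.2 : Lˣ) : L)) :=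
    fun a b => AddMonoidAlgebra.lift_single g a b
  -- characteristic two in L
  have h2L : (2 : L) = 0 := by
    have h : algebraMap (ZMod 2) L ((1:ZMod 2) + 1) = (1:L) + 1 := by rw [map_add, map_one]
    rw [show ((1:ZMod 2) + 1) = 0 from by decide, map_zero] at h
    rw [← one_add_one_eq_two]
    exact h.symm
  have hneg : ∀ x : L, -x = x := by
    intro x
    rw [neg_eq_iff_add_eq_zero, ← two_mul, h2L, zero_mul]
  -- the relation in L
  have h0' : (Ideal.Quotient.mk relIdeal18 (X 1)) ^ 2
      + (Ideal.Quotient.mk relIdeal18 (X 0)) * (Ideal.Quotient.mk relIdeal18 (X 2)) = 0 := by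
    rw [← map_pow, ← map_mul, ← map_add]
    exact Ideal.Quotient.eq_zero_iff_mem.mpr (Ideal.subset_span rfl)
  have hrelL : uL ^ 2 + algebraMap Ring18 L (Ideal.Quotient.mk relIdeal18 (X 0)) * (vu : L)
      = 0 := by
    have := congrArg (algebraMap Ring18 L) h0'
    rw [map_add, map_mul, map_pow, map_zero, ← hvu'] at this
    exact this
  have hpsiphi : (ψ : M18 →+* L).comp phi
      = (algebraMap Ring18 L).comp (Ideal.Quotient.mk relIdeal18) := by
    apply MvPolynomial.ringHom_ext
    · intro r
      exact RingHom.congr_fun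
        (RingHom.ext_zmod (((ψ : M18 →+* L).comp phi).comp (MvPolynomial.C))
          (((algebraMap Ring18 L).comp (Ideal.Quotient.mk relIdeal18)).comp (MvPolynomial.C))) r
    · intro i
      fin_cases i
      · show ψ (phi (X 0)) = algebraMap Ring18 L (Ideal.Quotient.mk relIdeal18 (X 0))
        rw [phi_X0, hpsi_single, one_smul]
        have hu2 : uL ^ 2 = algebraMap Ring18 L (Ideal.Quotient.mk relIdeal18 (X 0)) * (vu : L) := by
          have := hrelL
          have h3 : uL ^ 2
              = -(algebraMap Ring18 L (Ideal.Quotient.mk relIdeal18 (X 0)) * (vu : L)) :=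
            eq_neg_of_add_eq_zero_left this
          rw [h3, hneg]
        show uL ^ 2 * ((vu ^ (-1 : ℤ) : Lˣ) : L) = _
        rw [hu2, zpow_neg_one, mul_assoc, Units.mul_inv, mul_one]
      · show ψ (phi (X 1)) = algebraMap Ring18 L (Ideal.Quotient.mk relIdeal18 (X 1))
        rw [phi_X1, hpsi_single, one_smul]
        show uL ^ 1 * ((vu ^ (0 : ℤ) : Lˣ) : L) = _
        rw [zpow_zero, pow_one, Units.val_one, mul_one]
      · show ψ (phi (X 2)) = algebraMap Ring18 L (Ideal.Quotient.mk relIdeal18 (X 2))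
        rw [phi_X2, hpsi_single, one_smul]
        show uL ^ 0 * ((vu ^ (1 : ℤ) : Lˣ) : L) = _
        rw [zpow_one, pow_zero, one_mul, hvu']
  have hpsi_phib : ∀ r : Ring18, ψ (phib r) = algebraMap Ring18 L r := by
    intro r
    obtain ⟨p, rfl⟩ := Ideal.Quotient.mk_surjective r
    rw [phib_mk]
    exact RingHom.congr_fun hpsiphi p
  have hphibv : phib (Ideal.Quotient.mk relIdeal18 (X 2))
      = AddMonoidAlgebra.single ((0:ℕ), (1:ℤ)) (1:ZMod 2) := by rw [phib_mk, phi_X2]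
  letI : Algebra Ring18 M18 := phib.toAlgebra
  haveI hloc : IsLocalization (Submonoid.powers (Ideal.Quotient.mk relIdeal18 (X 2))) M18 := by
    refine ⟨?_, ?_, ?_⟩
    · rintro ⟨y, n, rfl⟩
      show IsUnit (phib (Ideal.Quotient.mk relIdeal18 (X 2) ^ n))
      rw [map_pow]
      refine IsUnit.pow n ?_
      rw [hphibv]
      exact IsUnit.of_mul_eq_one (AddMonoidAlgebra.single ((0:ℕ), (-1:ℤ)) 1) (by
        rw [AddMonoidAlgebra.single_mul_single, one_mul, AddMonoidAlgebra.one_def]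
        congr 1)
    · intro z
      obtain ⟨p, n, hpz⟩ := surj_aux z
      refine ⟨(Ideal.Quotient.mk relIdeal18 p, ⟨Ideal.Quotient.mk relIdeal18 (X 2) ^ n, n, rfl⟩), ?_⟩
      show z * phib (Ideal.Quotient.mk relIdeal18 (X 2) ^ n) = phib (Ideal.Quotient.mk relIdeal18 p)
      rw [map_pow, hphibv, single_v_pow, phib_mk]
      exact hpz
    · intro x y h
      have h' : algebraMap Ring18 L x = algebraMap Ring18 L y := by
        rw [← hpsi_phib x, ← hpsi_phib y]
        exact congrArg ψ h
      exact IsLocalization.exists_of_eq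
        (M := Submonoid.powers (Ideal.Quotient.mk relIdeal18 (X 2))) h'
  let e : L ≃ₐ[Ring18] M18 :=
    IsLocalization.algEquiv (Submonoid.powers (Ideal.Quotient.mk relIdeal18 (X 2))) L M18
  have hesymm : ∀ r : Ring18, e.symm (phib r) = algebraMap Ring18 L r := fun r =>
    AlgEquiv.commutes e.symm r
  let gl : M18 ≃ₗ[P2] L :=
    { toFun := e.symm, invFun := e,
      left_inv := fun m => e.apply_symm_apply m,
      right_inv := fun l => e.symm_apply_apply l,
      map_add' := fun a b => map_add e.symm a b,
      map_smul' := by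
        intro c m
        show e.symm (c • m) = c • e.symm m
        rw [smulP, map_mul]
        have hr : rho c = phib (structMap18 c) := (RingHom.congr_fun phib_structMap c).symm
        rw [hr, hesymm, Algebra.smul_def, hcomp]
        rfl }
  refine ⟨basisM.map gl, ?_, ?_, ?_⟩
  · rw [Module.Basis.map_apply, basisM_apply]
    have hfb : fb (false, 0) = 1 := by
      show AddMonoidAlgebra.single ((0:ℕ), (0:ℤ)) (1:ZMod 2) = 1
      rw [AddMonoidAlgebra.one_def, Prod.mk_zero_zero]
    show e.symm (fb (false, 0)) = 1
    rw [hfb, map_one]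
  · rw [Module.Basis.map_apply, basisM_apply]
    show e.symm (fb (true, 0)) = _
    have hfb : fb (true, 0) = phib (Ideal.Quotient.mk relIdeal18 (X 1)) := by
      rw [phib_mk, phi_X1]
      show AddMonoidAlgebra.single ((1:ℕ), (0:ℤ)) (1:ZMod 2) = _
      rfl
    rw [hfb, hesymm]
  · intro x j
    rw [Module.Basis.map_apply, Module.Basis.map_apply, basisM_apply, basisM_apply]
    show algebraMap Ring18 L (Ideal.Quotient.mk relIdeal18 (X 2)) * e.symm (fb (x, j))
      = e.symm (fb (x, j + 1))
    rw [← hesymm, hphibv, ← map_mul]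
    congr 1
    rw [fb, fb, AddMonoidAlgebra.single_mul_single, one_mul]
    congr 1
    simp [Prod.ext_iff]
    ring
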